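/- Let r ∈ ℕ, let a₁, a₂ be real numbers with 0 < a₂ < a₁, and let T be a real number with 0 < T ≤ 1. Then ∫_0^T (log u)^r / (a₁ + a₂·u) du = (1/a₂) · Σ_{i=0}^{r} (−1)^{i+1} · (r!/(r−i)!) · (log T)^{r−i} · Σ_{n=1}^∞ (−a₂·T/a₁)^n / n^{i+1}, where log denotes the real logarithm and the integral is an (improper) integral over the real interval (0,T). -/

import Mathlib

open Real MeasureTheory Finset

open Filter Set Topology


lemma ftc_Ioc {f G : ℝ → ℝ} {T L : ℝ} (hT : 0 < T)
    (hderiv : ∀ x ∈ Set.Ioi (0:ℝ), HasDerivAt G (f x) x)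
    (hint : IntegrableOn f (Set.Ioc 0 T))
    (hlim : Tendsto G (𝓝[>] (0:ℝ)) (𝓝 L)) :
    ∫ u in Set.Ioc (0:ℝ) T, f u = G T - L := by
  have h1 : ∀ ε ∈ Set.Ioc (0:ℝ) T, ∫ u in Set.Ioc ε T, f u = G T - G ε := by
    intro ε hε
    rw [← intervalIntegral.integral_of_le hε.2]
    refine intervalIntegral.integral_eq_sub_of_hasDerivAt (fun x hx => ?_) ?_
    · refine hderiv x ?_
      rcases hx with ⟨hx1, _⟩
      rw [min_eq_left hε.2] at hx1
      exact lt_of_lt_of_le hε.1 hx1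
    · rw [intervalIntegrable_iff_integrableOn_Ioc_of_le hε.2]
      exact hint.mono_set (Set.Ioc_subset_Ioc_left hε.1.le)
  have h2 : Tendsto (fun ε => ∫ u in Set.Ioc ε T, f u) (𝓝[>] (0:ℝ))
      (𝓝 (∫ u in Set.Ioc (0:ℝ) T, f u)) := by
    have heq : ∀ ε ∈ Set.Ioi (0:ℝ), ∫ u in Set.Ioc ε T, f u
        = ∫ u in Set.Ioc (0:ℝ) T, (Set.Ioi ε).indicator f u := by
      intro ε hε
      have hset : Set.Ioc (0:ℝ) T ∩ Set.Ioi ε = Set.Ioc ε T := by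
        ext x
        simp only [Set.mem_inter_iff, Set.mem_Ioc, Set.mem_Ioi]
        constructor
        · rintro ⟨⟨_, h2'⟩, h3'⟩; exact ⟨h3', h2'⟩
        · rintro ⟨h1', h2'⟩; exact ⟨⟨(hε.out).trans h1', h2'⟩, h1'⟩
      rw [setIntegral_indicator measurableSet_Ioi, hset]
    refine Tendsto.congr' ?_ (tendsto_integral_filter_of_dominated_convergence
      (F := fun ε => (Set.Ioi ε).indicator f) (f := f)
      (fun x => ‖f x‖) ?_ ?_ hint.norm ?_)
    · filter_upwards [self_mem_nhdsWithin] with ε hε using (heq ε hε).symm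
    · filter_upwards [self_mem_nhdsWithin] with ε hε
      exact (hint.aestronglyMeasurable.indicator measurableSet_Ioi)
    · filter_upwards [self_mem_nhdsWithin] with ε hε
      refine Filter.Eventually.of_forall (fun x => ?_)
      by_cases hx : x ∈ Set.Ioi ε <;> simp [Set.indicator_of_mem, Set.indicator_of_notMem, hx]
    · rw [ae_restrict_iff' measurableSet_Ioc]
      refine Filter.Eventually.of_forall (fun x hx => ?_)
      have : ∀ᶠ ε in 𝓝[>] (0:ℝ), ε < x := by
        apply eventually_nhdsWithin_of_eventually_nhds
        exact eventually_lt_nhds hx.1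
      refine tendsto_const_nhds.congr' ?_
      filter_upwards [this] with ε hε
      simp [Set.indicator_of_mem, Set.mem_Ioi.mpr hε]
  have h3 : Tendsto (fun ε => ∫ u in Set.Ioc ε T, f u) (𝓝[>] (0:ℝ)) (𝓝 (G T - L)) := by
    refine Tendsto.congr' ?_ (tendsto_const_nhds.sub hlim)
    filter_upwards [Ioo_mem_nhdsGT_of_mem (by simp [hT] : (0:ℝ) ∈ Set.Ico 0 T)] with ε hε
    exact (h1 ε ⟨hε.1, hε.2.le⟩).symm
  exact tendsto_nhds_unique h2 h3

lemma integrableOn_pow_mul_log_pow (n r : ℕ) {T : ℝ} (hT : 0 < T) (hT1 : T ≤ 1) :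
    IntegrableOn (fun u : ℝ => u ^ n * Real.log u ^ r) (Set.Ioc 0 T) := by
  set p : ℝ := 2 * (r + 1) with hp
  have hp0 : (0:ℝ) < p := by positivity
  have hexp : (-1 : ℝ) < -(r : ℝ) / p := by
    rw [neg_div, neg_lt_neg_iff, div_lt_one hp0]
    rw [hp]
    linarith
  have hg : IntegrableOn (fun u : ℝ => p ^ r * u ^ (-(r:ℝ)/p)) (Set.Ioc 0 T) := by
    have := (intervalIntegral.intervalIntegrable_rpow' (a := 0) (b := T) hexp)
    rw [intervalIntegrable_iff_integrableOn_Ioc_of_le hT.le] at this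
    exact this.const_mul _
  refine Integrable.mono' hg ?_ ?_
  · exact ((measurable_id.pow_const n).mul (Real.measurable_log.pow_const r)).aestronglyMeasurable
  · rw [ae_restrict_iff' measurableSet_Ioc]
    refine Filter.Eventually.of_forall (fun x hx => ?_)
    have hx0 : 0 < x := hx.1
    have hx1 : x ≤ 1 := hx.2.trans hT1
    have hlog : Real.log x ≤ 0 := Real.log_nonpos hx0.le hx1
    have h1 : ‖x ^ n * Real.log x ^ r‖ ≤ (-Real.log x) ^ r := by
      rw [norm_mul, norm_pow, norm_pow]
      have hxn : ‖x‖ ^ n ≤ 1 := pow_le_one₀ (by positivity) (by rw [Real.norm_of_nonneg hx0.le]; exact hx1)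
      have : ‖Real.log x‖ ^ r = (-Real.log x) ^ r := by
        rw [Real.norm_eq_abs, abs_of_nonpos hlog]
      calc ‖x‖ ^ n * ‖Real.log x‖ ^ r ≤ 1 * ‖Real.log x‖ ^ r := by
            apply mul_le_mul_of_nonneg_right hxn (by positivity)
        _ = (-Real.log x) ^ r := by rw [one_mul, this]
    refine h1.trans ?_
    have h2 : -Real.log x ≤ p * x ^ (-(1:ℝ)/p) := by
      have : -Real.log x = p * Real.log (x ^ (-(1:ℝ)/p)) := by
        rw [Real.log_rpow hx0]
        field_simp
      rw [this]
      have hrp : (0:ℝ) < x ^ (-(1:ℝ)/p) := Real.rpow_pos_of_pos hx0 _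
      have := Real.log_le_sub_one_of_pos hrp
      nlinarith [hrp]
    calc (-Real.log x) ^ r ≤ (p * x ^ (-(1:ℝ)/p)) ^ r := by
          apply pow_le_pow_left₀ (by linarith [Real.log_nonpos hx0.le hx1]) h2
      _ = p ^ r * x ^ (-(r:ℝ)/p) := by
          rw [mul_pow, ← Real.rpow_natCast (x ^ (-(1:ℝ)/p)) r, ← Real.rpow_mul hx0.le]
          congr 1
          field_simp

lemma tendsto_pow_mul_log_pow (n r : ℕ) :
    Tendsto (fun u : ℝ => u ^ (n + 1) * Real.log u ^ r) (𝓝[>] (0:ℝ)) (𝓝 0) := by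
  have hmul : Tendsto (fun x : ℝ => ((n:ℝ) + 1) * x) atTop atTop :=
    Tendsto.const_mul_atTop (by positivity) tendsto_id
  have H : Tendsto (fun x : ℝ => (((n:ℝ)+1) * x) ^ r * Real.exp (-(((n:ℝ)+1) * x)))
      atTop (𝓝 0) := (tendsto_pow_mul_exp_neg_atTop_nhds_zero r).comp hmul
  have hneglog : Tendsto (fun u : ℝ => -Real.log u) (𝓝[>] (0:ℝ)) atTop :=
    tendsto_neg_atBot_atTop.comp Real.tendsto_log_nhdsGT_zero
  have H2 : Tendsto (fun u : ℝ =>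
      ((-1:ℝ)) ^ r / ((n:ℝ)+1) ^ r * ((((n:ℝ)+1) * (-Real.log u)) ^ r
        * Real.exp (-(((n:ℝ)+1) * (-Real.log u))))) (𝓝[>] (0:ℝ)) (𝓝 0) := by
    have := (H.comp hneglog).const_mul (((-1:ℝ)) ^ r / ((n:ℝ)+1) ^ r)
    simpa using this
  refine H2.congr' ?_
  filter_upwards [self_mem_nhdsWithin] with u (hu : 0 < u)
  have h1 : Real.exp (-(((n:ℝ)+1) * (-Real.log u))) = u ^ (n+1) := by
    have h : -(((n:ℝ)+1) * (-Real.log u)) = ((n+1:ℕ):ℝ) * Real.log u := by push_cast; ring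
    rw [h, Real.exp_nat_mul, Real.exp_log hu]
  rw [h1, mul_pow, neg_pow]
  have hne : ((n:ℝ)+1) ^ r ≠ 0 := by positivity
  have hne2 : ((-1:ℝ)) ^ r ≠ 0 := by
    simp [pow_ne_zero]
  field_simp
  ring_nf
  rw [show ((-1:ℝ)) ^ (r * 2) = 1 from by
    rw [pow_mul]
    rcases neg_one_pow_eq_or ℝ r with h | h <;> rw [h] <;> norm_num]
  ring

lemma integral_pow_mul_log_pow (n : ℕ) {T : ℝ} (hT : 0 < T) (hT1 : T ≤ 1) : ∀ r : ℕ,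
    ∫ u in Set.Ioc (0:ℝ) T, u ^ n * Real.log u ^ r
      = ∑ i ∈ Finset.range (r+1), (-1:ℝ)^i * ((r.factorial : ℝ)/((r-i).factorial : ℝ))
          * Real.log T ^ (r-i) * (T^(n+1) / ((n:ℝ)+1)^(i+1)) := by
  have hn1 : ((n:ℝ)+1) ≠ 0 := by positivity
  intro r
  induction r with
  | zero =>
      have hbase : ∫ u in Set.Ioc (0:ℝ) T, u ^ n * Real.log u ^ 0
          = T ^ (n+1) / ((n:ℝ)+1) := by
        have := ftc_Ioc (f := fun u : ℝ => u ^ n * Real.log u ^ 0)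
          (G := fun u : ℝ => u ^ (n+1) / ((n:ℝ)+1)) (L := 0) hT
          (fun x _ => by
            simpa using ((hasDerivAt_pow (n+1) x).div_const ((n:ℝ)+1)).congr_deriv (by
              field_simp; simp))
          (integrableOn_pow_mul_log_pow n 0 hT hT1)
          (by
            have : Tendsto (fun u : ℝ => u ^ (n+1) * Real.log u ^ 0) (𝓝[>] (0:ℝ)) (𝓝 0) :=
              tendsto_pow_mul_log_pow n 0
            simpa using this.div_const ((n:ℝ)+1))
        simpa using this
      rw [hbase]
      simp
  | succ r ih =>
      -- FTC step
      have hderiv : ∀ x ∈ Set.Ioi (0:ℝ), HasDerivAt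
          (fun u : ℝ => u ^ (n+1) * Real.log u ^ (r+1) / ((n:ℝ)+1))
          (x ^ n * Real.log x ^ (r+1)
            + (((r:ℝ)+1)/((n:ℝ)+1)) * (x ^ n * Real.log x ^ r)) x := by
        intro x hx
        have hx0 : (0:ℝ) < x := hx
        have h1 : HasDerivAt (fun u : ℝ => u ^ (n+1)) (((n:ℝ)+1) * x ^ n) x := by
          simpa using hasDerivAt_pow (n+1) x
        have h2 : HasDerivAt (fun u : ℝ => Real.log u ^ (r+1))
            ((((r:ℝ)+1) * Real.log x ^ r) * x⁻¹) x := by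
          have := (hasDerivAt_pow (r+1) (Real.log x)).comp x (Real.hasDerivAt_log hx0.ne')
          simpa [Function.comp_def] using this
        have := (h1.mul h2).div_const ((n:ℝ)+1)
        refine this.congr_deriv ?_
        rw [pow_succ x n]
        field_simp
      have hint1 := integrableOn_pow_mul_log_pow n (r+1) hT hT1
      have hint2 := (integrableOn_pow_mul_log_pow n r hT hT1).const_mul (((r:ℝ)+1)/((n:ℝ)+1))
      have hlim : Tendsto (fun u : ℝ => u ^ (n+1) * Real.log u ^ (r+1) / ((n:ℝ)+1))
          (𝓝[>] (0:ℝ)) (𝓝 0) := by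
        simpa using (tendsto_pow_mul_log_pow n (r+1)).div_const ((n:ℝ)+1)
      have hftc := ftc_Ioc hT hderiv (hint1.add hint2) hlim
      rw [integral_add hint1 hint2, integral_const_mul] at hftc
      -- hftc : I(r+1) + c * I(r) = T^{n+1} log T^{r+1}/(n+1) - 0
      have hIr1 : ∫ u in Set.Ioc (0:ℝ) T, u ^ n * Real.log u ^ (r+1)
          = T ^ (n+1) * Real.log T ^ (r+1) / ((n:ℝ)+1)
            - (((r:ℝ)+1)/((n:ℝ)+1)) * ∫ u in Set.Ioc (0:ℝ) T, u ^ n * Real.log u ^ r := by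
        linarith [hftc]
      rw [hIr1, ih]
      rw [Finset.sum_range_succ' (fun i => (-1:ℝ)^i
        * (((r+1).factorial : ℝ)/((r+1-i).factorial : ℝ)) * Real.log T ^ (r+1-i)
        * (T^(n+1) / ((n:ℝ)+1)^(i+1))) (r+1)]
      have h0 : (-1:ℝ)^0 * (((r+1).factorial : ℝ)/((r+1-0).factorial : ℝ))
          * Real.log T ^ (r+1-0) * (T^(n+1) / ((n:ℝ)+1)^(0+1))
          = T ^ (n+1) * Real.log T ^ (r+1) / ((n:ℝ)+1) := by
        have hne : (((r+1)).factorial : ℝ) ≠ 0 := by exact_mod_cast Nat.factorial_ne_zero _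
        simp only [pow_zero, one_mul, Nat.sub_zero, pow_one, div_self hne]
        ring
      rw [h0]
      have hterm : ∀ k ∈ Finset.range (r+1), (-1:ℝ)^(k+1)
          * (((r+1).factorial : ℝ)/((r+1-(k+1)).factorial : ℝ)) * Real.log T ^ (r+1-(k+1))
          * (T^(n+1) / ((n:ℝ)+1)^(k+1+1))
          = -((((r:ℝ)+1)/((n:ℝ)+1)) * ((-1:ℝ)^k * ((r.factorial : ℝ)/((r-k).factorial : ℝ))
            * Real.log T ^ (r-k) * (T^(n+1) / ((n:ℝ)+1)^(k+1)))) := by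
        intro k hk
        have hsub : r + 1 - (k + 1) = r - k := by omega
        have hfact : ((r+1).factorial : ℝ) = ((r:ℝ)+1) * (r.factorial : ℝ) := by
          rw [Nat.factorial_succ]; push_cast; ring
        rw [hsub, hfact, pow_succ ((n:ℝ)+1) (k+1)]
        have hne1 : ((n:ℝ)+1) ^ (k+1) ≠ 0 := by positivity
        have hne2 : ((r - k).factorial : ℝ) ≠ 0 := by
          exact_mod_cast Nat.factorial_ne_zero _
        field_simp
        ring
      rw [Finset.sum_congr rfl hterm, Finset.sum_neg_distrib, ← Finset.mul_sum]
      ring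

/-- The identity (log) in the proof of Appendix Lemma 8.4:
`∫_0^T (log u)^r/(a₁+a₂u) du
  = (1/a₂) Σ_{i=0}^r (-1)^{i+1} (r!/(r-i)!) (log T)^{r-i} Li_{i+1}(-a₂T/a₁)`,
with the polylogarithm written as an absolutely convergent series. -/
theorem integral_log_pow_div_linear_upto (r : ℕ) (a₁ a₂ T : ℝ)
    (ha₂ : 0 < a₂) (ha : a₂ < a₁) (hT : 0 < T) (hT1 : T ≤ 1) :
    ∫ u in Set.Ioc (0:ℝ) T, (Real.log u) ^ r / (a₁ + a₂ * u) =
      (1 / a₂) * ∑ i ∈ Finset.range (r + 1),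
        (-1) ^ (i + 1) * ((r.factorial : ℝ) / ((r - i).factorial : ℝ)) *
          (Real.log T) ^ (r - i) *
          ∑' n : ℕ, (-a₂ * T / a₁) ^ (n + 1) / ((n : ℝ) + 1) ^ (i + 1) := by
  have ha₁ : 0 < a₁ := ha₂.trans ha
  set q : ℝ := a₂ / a₁ with hqdef
  have hq0 : 0 < q := div_pos ha₂ ha₁
  have hq1 : q < 1 := (div_lt_one ha₁).mpr ha
  set c : ℕ → ℝ := fun n => (-a₂/a₁) ^ n / a₁ with hcdef
  set I : ℕ → ℝ := fun n => ∫ u in Set.Ioc (0:ℝ) T, u ^ n * Real.log u ^ r with hIdef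
  -- Step 1: partial sums tend to the integral
  have hFN : ∀ N : ℕ, ∑ n ∈ Finset.range N, c n * I n
      = ∫ u in Set.Ioc (0:ℝ) T, ∑ n ∈ Finset.range N, c n * (u ^ n * Real.log u ^ r) := by
    intro N
    rw [integral_finset_sum _ (fun n _ => (integrableOn_pow_mul_log_pow n r hT hT1).const_mul _)]
    exact Finset.sum_congr rfl fun n _ => (integral_const_mul _ _).symm
  have hIntLog : IntegrableOn (fun u : ℝ => ‖Real.log u ^ r‖) (Set.Ioc 0 T) := by
    simpa [IntegrableOn] using (integrableOn_pow_mul_log_pow 0 r hT hT1).norm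
  set B : ℝ := (1 - q)⁻¹ / a₁ with hBdef
  have key1 : Tendsto (fun N => ∑ n ∈ Finset.range N, c n * I n) atTop
      (𝓝 (∫ u in Set.Ioc (0:ℝ) T, Real.log u ^ r / (a₁ + a₂ * u))) := by
    have hdom := tendsto_integral_of_dominated_convergence
      (F := fun N u => ∑ n ∈ Finset.range N, c n * (u ^ n * Real.log u ^ r))
      (f := fun u => Real.log u ^ r / (a₁ + a₂ * u))
      (bound := fun u => B * ‖Real.log u ^ r‖)
      (μ := volume.restrict (Set.Ioc (0:ℝ) T))
      (fun N => by
        apply Finset.aestronglyMeasurable_fun_sum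
        intro n _
        exact (((measurable_id.pow_const n).mul
          (Real.measurable_log.pow_const r)).const_mul _).aestronglyMeasurable)
      (hIntLog.const_mul _)
      (fun N => by
        rw [ae_restrict_iff' measurableSet_Ioc]
        refine Filter.Eventually.of_forall (fun u hu => ?_)
        have hu0 : 0 < u := hu.1
        have hu1 : u ≤ 1 := hu.2.trans hT1
        calc ‖∑ n ∈ Finset.range N, c n * (u ^ n * Real.log u ^ r)‖
            ≤ ∑ n ∈ Finset.range N, ‖c n * (u ^ n * Real.log u ^ r)‖ :=
              norm_sum_le _ _
          _ ≤ ∑ n ∈ Finset.range N, q ^ n * (‖Real.log u ^ r‖ / a₁) := by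
              refine Finset.sum_le_sum fun n _ => ?_
              rw [norm_mul, norm_mul, norm_div, norm_pow, norm_pow]
              have h1 : ‖-a₂/a₁‖ = q := by
                rw [norm_div, norm_neg, Real.norm_of_nonneg ha₂.le,
                  Real.norm_of_nonneg ha₁.le]
              have h2 : ‖u‖ ^ n ≤ 1 :=
                pow_le_one₀ (norm_nonneg u) (by rw [Real.norm_of_nonneg hu0.le]; exact hu1)
              rw [h1, Real.norm_of_nonneg ha₁.le]
              calc q ^ n / a₁ * (‖u‖ ^ n * ‖Real.log u ^ r‖)
                  ≤ q ^ n / a₁ * (1 * ‖Real.log u ^ r‖) := by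
                    apply mul_le_mul_of_nonneg_left
                      (mul_le_mul_of_nonneg_right h2 (norm_nonneg _)) (by positivity)
                _ = q ^ n * (‖Real.log u ^ r‖ / a₁) := by ring
          _ ≤ (1 - q)⁻¹ * (‖Real.log u ^ r‖ / a₁) := by
              rw [← Finset.sum_mul]
              apply mul_le_mul_of_nonneg_right _ (by positivity)
              have := Summable.sum_le_tsum (Finset.range N) (fun n _ => by positivity)
                (summable_geometric_of_lt_one hq0.le hq1)
              rwa [tsum_geometric_of_lt_one hq0.le hq1] at this
          _ = B * ‖Real.log u ^ r‖ := by rw [hBdef]; ring)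
      (by
        rw [ae_restrict_iff' measurableSet_Ioc]
        refine Filter.Eventually.of_forall (fun u hu => ?_)
        have hu0 : 0 < u := hu.1
        have hu1 : u ≤ 1 := hu.2.trans hT1
        have habs : |(-a₂ * u / a₁)| < 1 := by
          rw [abs_div, abs_of_nonneg ha₁.le, div_lt_one ha₁, abs_of_nonpos (by nlinarith)]
          nlinarith
        have hgeom := hasSum_geometric_of_abs_lt_one habs
        have htend := (hgeom.mul_left (Real.log u ^ r / a₁)).tendsto_sum_nat
        have hval : Real.log u ^ r / a₁ * (1 - -a₂ * u / a₁)⁻¹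
            = Real.log u ^ r / (a₁ + a₂ * u) := by
          have h1 : (1 : ℝ) - -a₂ * u / a₁ = (a₁ + a₂ * u) / a₁ := by
            field_simp
            ring
          rw [h1]
          have h2 : a₁ + a₂ * u ≠ 0 := by positivity
          field_simp
        rw [hval] at htend
        refine htend.congr fun N => Finset.sum_congr rfl fun n _ => ?_
        rw [show -a₂ * u / a₁ = (-a₂/a₁) * u by ring, mul_pow]
        ring)
    exact (Tendsto.congr (fun N => (hFN N).symm) hdom)
  -- Step 2: partial sums tend to the RHS
  set S : ℕ → ℝ := fun i => ∑' n : ℕ, (-a₂ * T / a₁) ^ (n + 1) / ((n : ℝ) + 1) ^ (i + 1)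
    with hSdef
  set st : ℕ → ℝ := fun i => (1 / a₂) * ((-1:ℝ) ^ (i + 1)
    * ((r.factorial : ℝ) / ((r - i).factorial : ℝ)) * Real.log T ^ (r - i)) with hstdef
  have habsT : |(-a₂ * T / a₁)| < 1 := by
    rw [abs_div, abs_of_nonneg ha₁.le, div_lt_one ha₁, abs_of_nonpos (by nlinarith)]
    nlinarith
  have hsummable : ∀ i : ℕ, Summable
      (fun n : ℕ => (-a₂ * T / a₁) ^ (n + 1) / ((n : ℝ) + 1) ^ (i + 1)) := by
    intro i
    refine Summable.of_norm ?_
    refine Summable.of_nonneg_of_le (fun n => norm_nonneg _) (fun n => ?_)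
      (summable_geometric_of_lt_one (abs_nonneg _) habsT)
    rw [norm_div, norm_pow, norm_pow, Real.norm_eq_abs]
    calc |(-a₂ * T / a₁)| ^ (n+1) / ‖(n:ℝ) + 1‖ ^ (i+1)
        ≤ |(-a₂ * T / a₁)| ^ (n+1) / 1 := by
          apply div_le_div_of_nonneg_left (by positivity) (by norm_num)
            (one_le_pow₀ (by rw [Real.norm_of_nonneg (by positivity)]; linarith [Nat.cast_nonneg (α := ℝ) n]))
      _ = |(-a₂ * T / a₁)| ^ n * |(-a₂ * T / a₁)| := by rw [div_one, pow_succ]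
      _ ≤ |(-a₂ * T / a₁)| ^ n * 1 :=
          mul_le_mul_of_nonneg_left habsT.le (by positivity)
      _ = |(-a₂ * T / a₁)| ^ n := mul_one _
  have hterm : ∀ i ∈ Finset.range (r+1), ∀ n : ℕ,
      c n * ((-1:ℝ)^i * ((r.factorial : ℝ)/((r-i).factorial : ℝ))
        * Real.log T ^ (r-i) * (T^(n+1) / ((n:ℝ)+1)^(i+1)))
      = st i * ((-a₂ * T / a₁) ^ (n + 1) / ((n : ℝ) + 1) ^ (i + 1)) := by
    intro i _ n
    rw [hcdef, hstdef]
    simp only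
    rw [show -a₂ * T / a₁ = (-a₂/a₁) * T by ring, mul_pow, pow_succ (-a₂/a₁) n,
      pow_succ (-1:ℝ) i]
    have h1 : ((n:ℝ)+1)^(i+1) ≠ 0 := by positivity
    field_simp
  have key2 : Tendsto (fun N => ∑ n ∈ Finset.range N, c n * I n) atTop
      (𝓝 (∑ i ∈ Finset.range (r+1), st i * S i)) := by
    have hrw : ∀ N : ℕ, ∑ n ∈ Finset.range N, c n * I n
        = ∑ i ∈ Finset.range (r+1), ∑ n ∈ Finset.range N,
            st i * ((-a₂ * T / a₁) ^ (n + 1) / ((n : ℝ) + 1) ^ (i + 1)) := by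
      intro N
      rw [← Finset.sum_comm]
      refine Finset.sum_congr rfl fun n _ => ?_
      rw [hIdef]
      simp only
      rw [integral_pow_mul_log_pow n hT hT1 r, Finset.mul_sum]
      exact Finset.sum_congr rfl fun i hi => hterm i hi n
    refine Tendsto.congr (fun N => (hrw N).symm) ?_
    refine tendsto_finset_sum _ fun i _ => ?_
    have := (((hsummable i).hasSum).tendsto_sum_nat).const_mul (st i)
    refine this.congr fun N => ?_
    rw [Finset.mul_sum]
  have hfinal := tendsto_nhds_unique key1 key2
  rw [hfinal, Finset.mul_sum]
  exact Finset.sum_congr rfl fun i _ => by rw [hstdef]; simp only; ring
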